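/- Let n ≥ 2 be a natural number and t an integer. The presented group E = ⟨g, h ∣ h^n·g^(−t), g·h·g^(−1)·h^(−1)⟩ (the abelian group on generators g, h with the single relation h^n = g^t) is an infinite cyclic group (isomorphic to ℤ) if and only if gcd(n, t) = 1. -/

import Mathlib

namespace AbPresAux

def rels (n : ℕ) (t : ℤ) : Set (FreeGroup (Fin 2)) :=
  {FreeGroup.of 1 ^ n * FreeGroup.of 0 ^ (-t),
   FreeGroup.of 0 * FreeGroup.of 1 * (FreeGroup.of 0)⁻¹ * (FreeGroup.of 1)⁻¹}

variable {n : ℕ} {t : ℤ}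

noncomputable def toHom {G : Type*} [Group G] (x y : G) (hc : Commute x y)
    (hr : y ^ (n : ℤ) * x ^ (-t) = 1) : PresentedGroup (rels n t) →* G :=
  PresentedGroup.toGroup (f := fun i : Fin 2 => if i = 0 then x else y) (by
    intro r hr'
    rcases hr' with h | h
    · subst h
      simp only [map_mul, map_pow, map_zpow, FreeGroup.lift_apply_of]
      show y ^ n * x ^ (-t) = 1
      rw [← zpow_natCast y n]
      exact hr
    · rw [Set.mem_singleton_iff] at h
      subst h
      simp only [map_mul, map_inv, FreeGroup.lift_apply_of]
      show x * y * x⁻¹ * y⁻¹ = 1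
      rw [hc.eq]
      group)

@[simp] lemma toHom_of0 {G : Type*} [Group G] (x y : G) (hc : Commute x y)
    (hr : y ^ (n : ℤ) * x ^ (-t) = 1) : toHom x y hc hr (PresentedGroup.of 0) = x := by
  simp [toHom]

@[simp] lemma toHom_of1 {G : Type*} [Group G] (x y : G) (hc : Commute x y)
    (hr : y ^ (n : ℤ) * x ^ (-t) = 1) : toHom x y hc hr (PresentedGroup.of 1) = y := by
  simp [toHom]

lemma rel_mem_one {r : FreeGroup (Fin 2)} (h : r ∈ rels n t) :
    PresentedGroup.mk (rels n t) r = 1 :=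
  (QuotientGroup.eq_one_iff _).mpr (Subgroup.subset_normalClosure h)

lemma rel_one :
    (PresentedGroup.of 1 : PresentedGroup (rels n t)) ^ (n : ℤ) *
      (PresentedGroup.of 0) ^ (-t) = 1 := by
  have := rel_mem_one (n := n) (t := t) (Set.mem_insert _ _)
  simpa [map_mul, map_pow, map_zpow, zpow_natCast, PresentedGroup.of] using this

lemma comm :
    Commute (PresentedGroup.of 0 : PresentedGroup (rels n t)) (PresentedGroup.of 1) := by
  have h := rel_mem_one (n := n) (t := t)
    (Set.mem_insert_of_mem _ (Set.mem_singleton _))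
  simp only [map_mul, map_inv] at h
  set x := (PresentedGroup.of 0 : PresentedGroup (rels n t))
  set y := (PresentedGroup.of 1 : PresentedGroup (rels n t))
  have h1 : x * y * x⁻¹ * y⁻¹ = 1 := h
  have h2 := mul_eq_one_iff_eq_inv.mp h1
  rw [inv_inv] at h2
  exact mul_inv_eq_iff_eq_mul.mp h2

lemma rel_one' :
    (PresentedGroup.of 1 : PresentedGroup (rels n t)) ^ (n : ℤ) =
      (PresentedGroup.of 0) ^ t := by
  have := rel_one (n := n) (t := t)
  rw [zpow_neg, mul_inv_eq_one] at this
  exact this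

lemma mul_zpow' {G : Type*} [Group G] {g h : G} (hc : Commute g h) (a b m : ℤ) :
    (g ^ a * h ^ b) ^ m = g ^ (a * m) * h ^ (b * m) := by
  rw [(hc.zpow_zpow a b).mul_zpow m, ← zpow_mul, ← zpow_mul]

end AbPresAux

open AbPresAux in
/-- The presented group `⟨g, h ∣ hⁿ = gᵗ, gh = hg⟩` (with `n ≥ 2`) is infinite cyclic
(isomorphic to `ℤ`) iff `gcd(n, t) = 1`. -/
theorem abelian_presented_group_infinite_cyclic_iff (n : ℕ) (hn : 2 ≤ n) (t : ℤ) :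
    Nonempty (PresentedGroup
        ({FreeGroup.of 1 ^ n * FreeGroup.of 0 ^ (-t),
          FreeGroup.of 0 * FreeGroup.of 1 * (FreeGroup.of 0)⁻¹ * (FreeGroup.of 1)⁻¹} :
          Set (FreeGroup (Fin 2))) ≃* Multiplicative ℤ) ↔
      Int.gcd n t = 1 := by
  show Nonempty (PresentedGroup (rels n t) ≃* Multiplicative ℤ) ↔ _
  set G := PresentedGroup (rels n t)
  set g : G := PresentedGroup.of 0
  set h : G := PresentedGroup.of 1
  have hc : Commute g h := comm
  have hrel : h ^ (n : ℤ) = g ^ t := rel_one'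
  constructor
  · rintro ⟨e⟩
    by_contra hd1
    set d : ℕ := Int.gcd n t with hd
    have hnne : (n : ℤ) ≠ 0 := by positivity
    have hdpos : 0 < d := Int.gcd_pos_iff.mpr (Or.inl hnne)
    have hdn : (d : ℤ) ∣ (n : ℤ) := Int.gcd_dvd_left _ _
    have hdt : (d : ℤ) ∣ t := Int.gcd_dvd_right _ _
    set n' : ℤ := (n : ℤ) / d with hn'
    set t' : ℤ := t / d with ht'
    have hn'd : n' * d = n := Int.ediv_mul_cancel hdn
    have ht'd : t' * d = t := Int.ediv_mul_cancel hdt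
    have hg1 : Int.gcd n' t' = 1 := Int.gcd_div_gcd_div_gcd hdpos
    set A : Int := Int.gcdA n' t'
    set B : Int := Int.gcdB n' t'
    have hbez : n' * A + t' * B = 1 := by
      have := Int.gcd_eq_gcd_ab n' t'
      rw [hg1] at this
      exact_mod_cast this.symm
    -- the hom to `ZMod d`
    have hfr : (Multiplicative.ofAdd ((A : ZMod d))) ^ (n : ℤ) *
        (Multiplicative.ofAdd ((-B : ℤ) : ZMod d)) ^ (-t) = 1 := by
      rw [← ofAdd_zsmul, ← ofAdd_zsmul, ← ofAdd_add, ← ofAdd_zero]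
      congr 1
      rw [zsmul_eq_mul, zsmul_eq_mul]
      push_cast
      have : ((n : ℤ) * A + t * B : ℤ) = ((n' * A + t' * B) * d : ℤ) := by
        rw [← hn'd, ← ht'd]; ring
      rw [show ((n : ZMod d) * (A : ZMod d) + (-t) * (-(B : ZMod d)) : ZMod d)
          = (((n : ℤ) * A + t * B : ℤ) : ZMod d) by push_cast; ring]
      rw [this]
      push_cast
      simp [ZMod.natCast_self]
    set f : G →* Multiplicative (ZMod d) :=
      toHom (Multiplicative.ofAdd ((-B : ℤ) : ZMod d))
        (Multiplicative.ofAdd ((A : ZMod d))) (Commute.all _ _) hfr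
    set x : G := h ^ n' * g ^ (-t') with hx
    have hxd : x ^ (d : ℤ) = 1 := by
      rw [hx, mul_zpow' hc.symm, hn'd, neg_mul, ht'd]
      exact rel_one
    have hx1 : x = 1 := by
      apply e.injective
      rw [map_one]
      have he : e x ^ (d : ℤ) = 1 := by rw [← map_zpow, hxd, map_one]
      have h0 : (d : ℤ) * Multiplicative.toAdd (e x) = 0 := by
        have := congrArg Multiplicative.toAdd he
        rwa [toAdd_zpow, toAdd_one, smul_eq_mul] at this
      have : Multiplicative.toAdd (e x) = 0 := by
        rcases mul_eq_zero.mp h0 with h' | h'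
        · exact absurd h' (by exact_mod_cast hdpos.ne')
        · exact h'
      calc e x = Multiplicative.ofAdd (Multiplicative.toAdd (e x)) := rfl
        _ = Multiplicative.ofAdd 0 := by rw [this]
        _ = 1 := rfl
    have hfx : f x = Multiplicative.ofAdd (((1 : ℤ) : ZMod d)) := by
      rw [hx, map_mul, map_zpow, map_zpow, toHom_of0, toHom_of1,
        ← ofAdd_zsmul, ← ofAdd_zsmul, ← ofAdd_add]
      congr 1
      rw [zsmul_eq_mul, zsmul_eq_mul]
      push_cast
      rw [show ((n' : ZMod d) * (A : ZMod d) + (-t') * (-(B : ZMod d)) : ZMod d)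
          = ((n' * A + t' * B : ℤ) : ZMod d) by push_cast; ring]
      rw [hbez]
      norm_num
    rw [hx1, map_one] at hfx
    have h10 : ((1 : ℤ) : ZMod d) = 0 := by
      have := congrArg Multiplicative.toAdd hfx.symm
      rwa [toAdd_ofAdd, toAdd_one] at this
    have : (d : ℤ) ∣ 1 := (ZMod.intCast_zmod_eq_zero_iff_dvd 1 d).mp h10
    have : d ∣ 1 := by exact_mod_cast this
    exact hd1 (Nat.dvd_one.mp this)
  · intro hgcd
    set a : ℤ := Int.gcdA n t
    set b : ℤ := Int.gcdB n t
    have hbez : (n : ℤ) * a + t * b = 1 := by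
      have := Int.gcd_eq_gcd_ab (n : ℤ) t
      rw [hgcd] at this
      exact_mod_cast this.symm
    have hφr : (Multiplicative.ofAdd t) ^ (n : ℤ) *
        (Multiplicative.ofAdd (n : ℤ)) ^ (-t) = 1 := by
      rw [← ofAdd_zsmul, ← ofAdd_zsmul, ← ofAdd_add, ← ofAdd_zero]
      congr 1
      simp only [smul_eq_mul]
      ring
    set φ : G →* Multiplicative ℤ :=
      toHom (Multiplicative.ofAdd (n : ℤ)) (Multiplicative.ofAdd t) (Commute.all _ _) hφr
    set ψ : Multiplicative ℤ →* G := zpowersHom G (g ^ a * h ^ b)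
    have hψ1 : ψ (Multiplicative.ofAdd 1) = g ^ a * h ^ b := by
      show (g ^ a * h ^ b) ^ (1 : ℤ) = _
      rw [zpow_one]
    have h2 : φ.comp ψ = MonoidHom.id (Multiplicative ℤ) := by
      apply MonoidHom.ext_mint
      rw [MonoidHom.comp_apply, hψ1, MonoidHom.id_apply, map_mul, map_zpow, map_zpow,
        toHom_of0, toHom_of1, ← ofAdd_zsmul, ← ofAdd_zsmul, ← ofAdd_add]
      congr 1
      simp only [smul_eq_mul]
      linarith [hbez]
    have h1 : ψ.comp φ = MonoidHom.id G := by
      apply PresentedGroup.ext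
      intro i
      fin_cases i
      · show ψ (φ g) = g
        rw [show φ g = Multiplicative.ofAdd (n : ℤ) from toHom_of0 _ _ _ _]
        show (g ^ a * h ^ b) ^ ((Multiplicative.ofAdd (n : ℤ)).toAdd) = g
        rw [toAdd_ofAdd, mul_zpow' hc a b]
        have : h ^ (b * (n : ℤ)) = g ^ (t * b) := by
          rw [mul_comm b, zpow_mul, hrel, ← zpow_mul]
        rw [this, ← zpow_add, show a * (n : ℤ) + t * b = 1 by linarith [hbez], zpow_one]
      · show ψ (φ h) = h
        rw [show φ h = Multiplicative.ofAdd t from toHom_of1 _ _ _ _]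
        show (g ^ a * h ^ b) ^ ((Multiplicative.ofAdd t).toAdd) = h
        rw [toAdd_ofAdd, mul_zpow' hc a b]
        have hh : h ^ (b * t) = h * g ^ (-(a * t)) := by
          have e1 : b * t = 1 + (n : ℤ) * (-a) := by linarith [hbez]
          rw [e1, zpow_add, zpow_one, zpow_mul, hrel, ← zpow_mul]
          congr 1
          ring_nf
        rw [hh, ← mul_assoc, (hc.zpow_left (a * t)).eq, mul_assoc, ← zpow_add]
        simp
    exact ⟨MonoidHom.toMulEquiv φ ψ h1 h2⟩
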